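/- Let Γ be a finite connected simple graph of order n with diameter D(Γ) and maximum degree Δ, and let k be an integer. If S is a global defensive k-alliance in Γ such that the subgraph induced by S is connected, then |S|·(⌊(Δ − k)/2⌋ + 2) ≥ n + D(Γ) − 1; in particular the global connected defensive k-alliance number satisfies γ_k^{ca}(Γ) ≥ ⌈(n + D(Γ) − 1)/(⌊(Δ − k)/2⌋ + 2)⌉. -/

import Mathlib

/-- Number of neighbors that `v` has in `S`. -/
noncomputable def SimpleGraph.nbrCount {V : Type*} (G : SimpleGraph V) (S : Set V) (v : V) : ℕ :=
  (S ∩ {u | G.Adj v u}).ncard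

/-- Degree of a vertex, counted via `ncard`. -/
noncomputable def SimpleGraph.degN {V : Type*} (G : SimpleGraph V) (v : V) : ℕ :=
  {u | G.Adj v u}.ncard

/-- `S` is a defensive `k`-alliance. -/
def SimpleGraph.IsDefensiveAlliance {V : Type*} (G : SimpleGraph V) (k : ℤ) (S : Set V) : Prop :=
  S.Nonempty ∧ ∀ v ∈ S, (G.nbrCount Sᶜ v : ℤ) + k ≤ (G.nbrCount S v : ℤ)

/-- `S` is a dominating set. -/
def SimpleGraph.IsDominating {V : Type*} (G : SimpleGraph V) (S : Set V) : Prop :=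
  ∀ v ∈ Sᶜ, ∃ u ∈ S, G.Adj v u

/-- `S` is a global defensive `k`-alliance. -/
def SimpleGraph.IsGlobalDefensiveAlliance {V : Type*} (G : SimpleGraph V) (k : ℤ) (S : Set V) : Prop :=
  G.IsDefensiveAlliance k S ∧ G.IsDominating S

/-- Global defensive `k`-alliance number. -/
noncomputable def SimpleGraph.globalDefensiveAllianceNumber {V : Type*} (G : SimpleGraph V) (k : ℤ) : ℕ :=
  sInf {m | ∃ S : Set V, G.IsGlobalDefensiveAlliance k S ∧ S.ncard = m}

/-- Minimum degree. -/
noncomputable def SimpleGraph.minDegN {V : Type*} (G : SimpleGraph V) : ℕ :=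
  sInf (Set.range G.degN)

/-- Maximum degree. -/
noncomputable def SimpleGraph.maxDegN {V : Type*} (G : SimpleGraph V) : ℕ :=
  sSup (Set.range G.degN)

/-- Global connected defensive `k`-alliance number. -/
noncomputable def SimpleGraph.globalConnectedDefensiveAllianceNumber {V : Type*}
    (G : SimpleGraph V) (k : ℤ) : ℕ :=
  sInf {m | ∃ S : Set V, G.IsGlobalDefensiveAlliance k S ∧ (G.induce S).Connected ∧ S.ncard = m}

private lemma nbr_split {V : Type*} [Fintype V] (G : SimpleGraph V) (S : Set V) (v : V) :
    G.nbrCount S v + G.nbrCount Sᶜ v = G.degN v := by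
  rw [SimpleGraph.nbrCount, SimpleGraph.nbrCount, SimpleGraph.degN,
    ← Set.ncard_union_eq (Disjoint.mono Set.inter_subset_left Set.inter_subset_left
      disjoint_compl_right) (Set.toFinite _) (Set.toFinite _)]
  congr 1
  rw [← Set.union_inter_distrib_right, Set.union_compl_self, Set.univ_inter]

private lemma deg_le_max {V : Type*} [Fintype V] (G : SimpleGraph V) (v : V) :
    G.degN v ≤ G.maxDegN :=
  le_csSup ((Set.finite_range G.degN).bddAbove) ⟨v, rfl⟩

/-- Per-vertex bound on the number of outside neighbours. -/
private lemma nbr_compl_le {V : Type*} [Fintype V] (G : SimpleGraph V) {k : ℤ} {S : Set V}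
    (hS : G.IsGlobalDefensiveAlliance k S) {v : V} (hv : v ∈ S) :
    (G.nbrCount Sᶜ v : ℤ) ≤ ((G.maxDegN : ℤ) - k) / 2 := by
  have h1 := hS.1.2 v hv
  have h2 := nbr_split G S v
  have h3 := deg_le_max G v
  rw [Int.le_ediv_iff_mul_le (by norm_num : (0:ℤ) < 2)]
  have h2' : (G.nbrCount S v : ℤ) + (G.nbrCount Sᶜ v : ℤ) = (G.degN v : ℤ) := by
    exact_mod_cast h2
  have h3' : (G.degN v : ℤ) ≤ (G.maxDegN : ℤ) := by exact_mod_cast h3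
  linarith

private lemma alliance_main {V : Type*} [Fintype V]
    (G : SimpleGraph V) (hconn : G.Connected) (k : ℤ) (S : Set V)
    (hS : G.IsGlobalDefensiveAlliance k S) (hSc : (G.induce S).Connected) :
    (Fintype.card V : ℤ) + (G.diam : ℤ) - 1 ≤
      (S.ncard : ℤ) * (((G.maxDegN : ℤ) - k) / 2 + 2) := by
  classical
  set f : ℤ := ((G.maxDegN : ℤ) - k) / 2 with hf
  -- counting bound
  have hnb : ∀ v, (G.nbrCount Sᶜ v) = (Sᶜ.toFinset.filter (fun u => G.Adj v u)).card := by
    intro v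
    rw [SimpleGraph.nbrCount, Set.ncard_eq_toFinset_card']
    congr 1
    ext u
    simp [Set.mem_toFinset]
  have hcount : (Sᶜ.ncard : ℤ) ≤ (S.ncard : ℤ) * f := by
    have h1 : Sᶜ.toFinset.card ≤
        ∑ v ∈ S.toFinset, (Sᶜ.toFinset.filter (fun u => G.Adj v u)).card := by
      have hdomc : ∀ u ∈ Sᶜ.toFinset, 1 ≤ (S.toFinset.filter (fun v => G.Adj v u)).card := by
        intro u hu
        rw [Set.mem_toFinset] at hu
        obtain ⟨w, hw, hadj⟩ := hS.2 u hu
        refine Finset.card_pos.mpr ⟨w, ?_⟩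
        simp only [Finset.mem_filter, Set.mem_toFinset]
        exact ⟨hw, hadj.symm⟩
      calc Sᶜ.toFinset.card = ∑ u ∈ Sᶜ.toFinset, 1 := by simp
        _ ≤ ∑ u ∈ Sᶜ.toFinset, (S.toFinset.filter (fun v => G.Adj v u)).card :=
            Finset.sum_le_sum hdomc
        _ = ∑ v ∈ S.toFinset, (Sᶜ.toFinset.filter (fun u => G.Adj v u)).card := by
            simp only [Finset.card_filter]
            rw [Finset.sum_comm]
    have h2 : (Sᶜ.toFinset.card : ℤ) ≤ ∑ v ∈ S.toFinset, (G.nbrCount Sᶜ v : ℤ) := by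
      have : (Sᶜ.toFinset.card : ℤ) ≤
          ((∑ v ∈ S.toFinset, (Sᶜ.toFinset.filter (fun u => G.Adj v u)).card : ℕ) : ℤ) := by
        exact_mod_cast h1
      refine this.trans_eq ?_
      push_cast
      refine Finset.sum_congr rfl fun v _ => ?_
      rw [hnb v]
    have h3 : ∑ v ∈ S.toFinset, (G.nbrCount Sᶜ v : ℤ) ≤ ∑ v ∈ S.toFinset, f :=
      Finset.sum_le_sum fun v hv => nbr_compl_le G hS (Set.mem_toFinset.mp hv)
    have h4 : ∑ v ∈ S.toFinset, f = (S.ncard : ℤ) * f := by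
      rw [Finset.sum_const, Set.ncard_eq_toFinset_card' S]
      simp [mul_comm]
    have h5 : (Sᶜ.ncard : ℤ) = (Sᶜ.toFinset.card : ℤ) := by
      rw [Set.ncard_eq_toFinset_card']
    linarith
  -- diameter bound
  have hV : Nonempty V := hconn.nonempty
  obtain ⟨u, v, huv⟩ := G.exists_dist_eq_diam
  have near : ∀ x : V, ∃ y ∈ S, G.dist x y ≤ 1 := by
    intro x
    by_cases hx : x ∈ S
    · exact ⟨x, hx, by rw [SimpleGraph.dist_self]; omega⟩
    · obtain ⟨y, hy, hadj⟩ := hS.2 x hx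
      refine ⟨y, hy, ?_⟩
      simpa using SimpleGraph.dist_le hadj.toWalk
  have hin : ∀ y z, y ∈ S → z ∈ S → G.dist y z + 1 ≤ S.ncard := by
    intro y z hy hz
    obtain ⟨p⟩ := hSc.preconnected ⟨y, hy⟩ ⟨z, hz⟩
    have hlt : (p.toPath : (G.induce S).Walk ⟨y, hy⟩ ⟨z, hz⟩).length < Fintype.card ↥S :=
      (p.toPath.isPath).length_lt
    have hw : G.dist y z ≤ (p.toPath : (G.induce S).Walk ⟨y, hy⟩ ⟨z, hz⟩).length := by
      have := SimpleGraph.dist_le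
        ((p.toPath : (G.induce S).Walk ⟨y, hy⟩ ⟨z, hz⟩).map
          (SimpleGraph.Embedding.comap (Function.Embedding.subtype _) G).toHom)
      rw [SimpleGraph.Walk.length_map] at this
      exact this
    have hcard : Fintype.card ↥S = S.ncard := by
      rw [Set.ncard_eq_toFinset_card', Set.toFinset_card]
    omega
  have hdiam : (G.diam : ℤ) ≤ (S.ncard : ℤ) + 1 := by
    obtain ⟨y, hy, hy1⟩ := near u
    obtain ⟨z, hz, hz1⟩ := near v
    have t1 : G.dist u v ≤ G.dist u y + G.dist y v := hconn.dist_triangle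
    have t2 : G.dist y v ≤ G.dist y z + G.dist z v := hconn.dist_triangle
    have t3 : G.dist z v ≤ 1 := by rw [SimpleGraph.dist_comm]; exact hz1
    have t4 := hin y z hy hz
    have : G.diam ≤ S.ncard + 1 := by omega
    exact_mod_cast this
  have hn : (Fintype.card V : ℤ) = (S.ncard : ℤ) + (Sᶜ.ncard : ℤ) := by
    have := Set.ncard_add_ncard_compl S
    rw [Nat.card_eq_fintype_card] at this
    exact_mod_cast this.symm
  nlinarith [hcount, hdiam, hn]

theorem global_connected_defensive_alliance_maxdeg_bound {V : Type*} [Fintype V]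
    (G : SimpleGraph V) (hconn : G.Connected) (k : ℤ) (S : Set V)
    (hS : G.IsGlobalDefensiveAlliance k S) (hSc : (G.induce S).Connected) :
    (Fintype.card V : ℤ) + (G.diam : ℤ) - 1 ≤
        (S.ncard : ℤ) * (((G.maxDegN : ℤ) - k) / 2 + 2) ∧
      ⌈((Fintype.card V : ℚ) + (G.diam : ℚ) - 1) /
          ((((G.maxDegN : ℤ) - k) / 2 + 2 : ℤ) : ℚ)⌉ ≤
        (G.globalConnectedDefensiveAllianceNumber k : ℤ) := by
  classical
  refine ⟨alliance_main G hconn k S hS hSc, ?_⟩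
  set d : ℤ := ((G.maxDegN : ℤ) - k) / 2 + 2 with hd
  have hf0 : 0 ≤ ((G.maxDegN : ℤ) - k) / 2 := by
    obtain ⟨v0, hv0⟩ := hS.1.1
    exact le_trans (by positivity) (nbr_compl_le G hS hv0)
  have hdpos : (0 : ℤ) < d := by omega
  have hmem : (G.globalConnectedDefensiveAllianceNumber k) ∈
      {m | ∃ S' : Set V, G.IsGlobalDefensiveAlliance k S' ∧ (G.induce S').Connected ∧
        S'.ncard = m} :=
    Nat.sInf_mem ⟨S.ncard, S, hS, hSc, rfl⟩
  obtain ⟨S', hS', hSc', hcard⟩ := hmem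
  have hmain := alliance_main G hconn k S' hS' hSc'
  rw [hcard] at hmain
  rw [Int.ceil_le, div_le_iff₀ (by exact_mod_cast hdpos)]
  exact_mod_cast hmain
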